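/- Let K ⊆ ℝ^d be a nonempty convex set, let f : ℝ^d → ℝ be differentiable, H-strongly convex, and L-smooth, let w* be a minimizer of f over K, fix weights α_t = t², let τ_1,…,τ_T be integers with 0 ≤ τ_t ≤ t − 1 and mean μ_τ and variance σ_τ², let G̃ > 0, and let x_1,…,x_T ∈ K satisfy ‖x_t − x_{t−τ_t}‖ ≤ 48·G̃·(τ_t + 2)/(H·t) for all t (with x_0 := x_1 if needed for t = 1, τ_1 = 0). Then Σ_{t=1}^T α_t·⟨∇f(x_t) − ∇f(x_{t−τ_t}), x_t − w*⟩ ≤ Σ_{t=1}^T (α_t/4)·(f(x_t) − f(w*)) + 4608·L²·G̃²·T·(σ_τ² + μ_τ² + 4·μ_τ + 4)/H³. -/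

import Mathlib

open Finset
open scoped RealInnerProductSpace

/-- Bound on the delay term (D) in the strongly convex analysis:
for an `H`-strongly convex, `L`-smooth `f` minimized at `w* ∈ K`, weights `α t = t²`,
delays `0 ≤ τ t ≤ t - 1` with mean `μ_τ` and variance `σ_τ²`, and points `x t ∈ K`
satisfying the stability bound `‖x t - x (t - τ t)‖ ≤ 48 G̃ (τ t + 2)/(H t)`, the sum
`∑ α t ⟪∇f(x t) - ∇f(x (t - τ t)), x t - w*⟫` is at most
`∑ (α t / 4) (f (x t) - f w*) + 4608 L² G̃² T (σ_τ² + μ_τ² + 4 μ_τ + 4) / H³`. -/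
lemma grad_min_nonneg {d : ℕ} {K : Set (EuclideanSpace ℝ (Fin d))} (hKconv : Convex ℝ K)
    {f : EuclideanSpace ℝ (Fin d) → ℝ} (hdiff : Differentiable ℝ f)
    {w : EuclideanSpace ℝ (Fin d)} (hw : w ∈ K) (hmin : ∀ z ∈ K, f w ≤ f z)
    {z : EuclideanSpace ℝ (Fin d)} (hz : z ∈ K) :
    0 ≤ ⟪gradient f w, z - w⟫ := by
  set v := z - w with hv
  have hγ : HasDerivAt (fun s : ℝ => w + s • v) v 0 := by
    simpa using ((hasDerivAt_id (0 : ℝ)).smul_const v).const_add w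
  have hg := (hdiff w).hasGradientAt
  have hφ : HasDerivAt (fun s : ℝ => f (w + s • v)) ⟪gradient f w, v⟫ 0 := by
    have h1 : HasFDerivAt f (InnerProductSpace.toDual ℝ _ (gradient f w))
        ((fun s : ℝ => w + s • v) 0) := by
      simpa using hg.hasFDerivAt
    have := h1.comp_hasDerivAt 0 hγ
    simpa [InnerProductSpace.toDual_apply_apply, Function.comp_def] using this
  have hslope : Filter.Tendsto (fun s : ℝ => (f (w + s • v) - f w) / s)
      (nhdsWithin 0 (Set.Ioi 0)) (nhds ⟪gradient f w, v⟫) := by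
    have := (hφ.hasDerivWithinAt (s := Set.Ioi (0:ℝ)))
    rw [hasDerivWithinAt_iff_tendsto_slope] at this
    have hset : Set.Ioi (0:ℝ) \ {0} = Set.Ioi 0 :=
      Set.diff_singleton_eq_self (by simp)
    rw [hset] at this
    refine this.congr' ?_
    filter_upwards [self_mem_nhdsWithin] with s hs
    simp [slope_def_field]
  refine ge_of_tendsto hslope ?_
  have h0 : ∀ᶠ s : ℝ in nhds (0:ℝ), s < 1 := eventually_lt_nhds one_pos
  have h1 : ∀ᶠ s : ℝ in nhdsWithin 0 (Set.Ioi 0), s < 1 :=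
    Filter.Eventually.filter_mono nhdsWithin_le_nhds h0
  filter_upwards [self_mem_nhdsWithin, h1] with s hs hs1
  have hsK : w + s • v ∈ K := by
    have := hKconv hw hz (a := 1 - s) (b := s) (by linarith [Set.mem_Ioi.mp hs]) (le_of_lt hs) (by ring)
    have heq : (1 - s) • w + s • z = w + s • v := by
      rw [hv]; module
    rwa [heq] at this
  have := hmin _ hsK
  have hspos : (0:ℝ) < s := hs
  exact div_nonneg (by linarith) hspos.le

set_option maxHeartbeats 1000000 in
theorem stmt_18 {d T : ℕ} (K : Set (EuclideanSpace ℝ (Fin d)))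
    (hK : K.Nonempty) (hKconv : Convex ℝ K)
    (H L Gt : ℝ) (hH : 0 < H) (hL0 : 0 ≤ L) (hGt : 0 < Gt)
    (f : EuclideanSpace ℝ (Fin d) → ℝ) (hdiff : Differentiable ℝ f)
    (hsc : ∀ a b : EuclideanSpace ℝ (Fin d),
      f a - f b ≤ ⟪gradient f a, a - b⟫ - H / 2 * ‖a - b‖ ^ 2)
    (hL : ∀ a b : EuclideanSpace ℝ (Fin d), ‖gradient f a - gradient f b‖ ≤ L * ‖a - b‖)
    (wstar : EuclideanSpace ℝ (Fin d)) (hws : wstar ∈ K) (hmin : ∀ z ∈ K, f wstar ≤ f z)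
    (τ : ℕ → ℕ) (hτ : ∀ t ∈ Icc 1 T, τ t ≤ t - 1)
    (μτ στ2 : ℝ)
    (hμτ : μτ = (∑ t ∈ Icc 1 T, (τ t : ℝ)) / T)
    (hστ : στ2 = (∑ t ∈ Icc 1 T, (τ t : ℝ) ^ 2) / T - μτ ^ 2)
    (x : ℕ → EuclideanSpace ℝ (Fin d))
    (hxK : ∀ t ∈ Icc 1 T, x t ∈ K)
    (hxb : ∀ t ∈ Icc 1 T, ‖x t - x (t - τ t)‖ ≤ 48 * Gt * (τ t + 2) / (H * t)) :
    ∑ t ∈ Icc 1 T, (t : ℝ) ^ 2 * ⟪gradient f (x t) - gradient f (x (t - τ t)), x t - wstar⟫ ≤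
      (∑ t ∈ Icc 1 T, (t : ℝ) ^ 2 / 4 * (f (x t) - f wstar))
      + 4608 * L ^ 2 * Gt ^ 2 * T * (στ2 + μτ ^ 2 + 4 * μτ + 4) / H ^ 3 := by
  have key : ∀ t ∈ Icc 1 T,
      (t : ℝ) ^ 2 * ⟪gradient f (x t) - gradient f (x (t - τ t)), x t - wstar⟫ ≤
      (t : ℝ) ^ 2 / 4 * (f (x t) - f wstar)
        + 4608 * L ^ 2 * Gt ^ 2 / H ^ 3 * ((τ t : ℝ) + 2) ^ 2 := by
    intro t ht
    obtain ⟨ht1, htT⟩ := mem_Icc.mp ht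
    have htpos : (0 : ℝ) < t := by exact_mod_cast ht1
    set a := ‖x t - x (t - τ t)‖ with ha_def
    set b := ‖x t - wstar‖ with hb_def
    have ha : 0 ≤ a := norm_nonneg _
    have hb : 0 ≤ b := norm_nonneg _
    have hinner : ⟪gradient f (x t) - gradient f (x (t - τ t)), x t - wstar⟫ ≤ L * a * b :=
      le_trans (real_inner_le_norm _ _) (mul_le_mul_of_nonneg_right (hL _ _) hb)
    -- strong convexity lower bound at the minimizer
    have hF : H / 2 * b ^ 2 ≤ f (x t) - f wstar := by
      have h1 := hsc wstar (x t)
      have h2 := grad_min_nonneg hKconv hdiff hws hmin (hxK t ht)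
      have h3 : ⟪gradient f wstar, wstar - x t⟫ ≤ 0 := by
        have he : ⟪gradient f wstar, wstar - x t⟫ = -⟪gradient f wstar, x t - wstar⟫ := by
          rw [← inner_neg_right]; congr 1; abel
        rw [he]; linarith
      rw [norm_sub_rev] at h1
      linarith
    -- stability bound, squared
    have hHt : (0 : ℝ) < H * t := by positivity
    have h4 : a * (H * t) ≤ 48 * Gt * ((τ t : ℝ) + 2) := by
      have := hxb t ht
      rwa [le_div_iff₀ hHt] at this
    have h5 : H ^ 2 * (t : ℝ) ^ 2 * a ^ 2 ≤ 2304 * Gt ^ 2 * ((τ t : ℝ) + 2) ^ 2 := by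
      nlinarith [mul_le_mul h4 h4 (mul_nonneg ha hHt.le) (by positivity :
        (0 : ℝ) ≤ 48 * Gt * ((τ t : ℝ) + 2))]
    have hH3 : (0 : ℝ) < H ^ 3 := by positivity
    rw [← mul_le_mul_iff_right₀ hH3]
    have hre : H ^ 3 * ((t : ℝ) ^ 2 / 4 * (f (x t) - f wstar)
          + 4608 * L ^ 2 * Gt ^ 2 / H ^ 3 * ((τ t : ℝ) + 2) ^ 2)
        = H ^ 3 * ((t : ℝ) ^ 2 / 4 * (f (x t) - f wstar))
          + 4608 * L ^ 2 * Gt ^ 2 * ((τ t : ℝ) + 2) ^ 2 := by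
      field_simp
    rw [hre]
    nlinarith [mul_le_mul_of_nonneg_left hinner (by positivity : (0:ℝ) ≤ H ^ 3 * (t:ℝ) ^ 2),
      mul_le_mul_of_nonneg_left hF (by positivity : (0:ℝ) ≤ H ^ 3 * (t:ℝ) ^ 2 / 4),
      mul_le_mul_of_nonneg_left h5 (by positivity : (0:ℝ) ≤ 2 * L ^ 2),
      mul_nonneg (mul_nonneg (sq_nonneg H) (sq_nonneg (t:ℝ))) (sq_nonneg (H * b - 4 * L * a)),
      hH.le, hL0, ha, hb]
  have hsum : ∑ t ∈ Icc 1 T, ((τ t : ℝ) + 2) ^ 2 = T * (στ2 + μτ ^ 2 + 4 * μτ + 4) := by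
    have hexpand : ∑ t ∈ Icc 1 T, ((τ t : ℝ) + 2) ^ 2
        = (∑ t ∈ Icc 1 T, (τ t : ℝ) ^ 2) + 4 * (∑ t ∈ Icc 1 T, (τ t : ℝ)) + 4 * T := by
      have h : ∀ t, ((τ t : ℝ) + 2) ^ 2 = (τ t : ℝ) ^ 2 + 4 * (τ t : ℝ) + 4 := fun t => by ring
      simp_rw [h]
      rw [Finset.sum_add_distrib, Finset.sum_add_distrib, ← Finset.mul_sum,
        Finset.sum_const, Nat.card_Icc]
      simp only [Nat.add_sub_cancel, nsmul_eq_mul]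
      ring
    rcases Nat.eq_zero_or_pos T with hT0 | hTpos
    · subst hT0; simp
    · have hTne : (T : ℝ) ≠ 0 := Nat.cast_ne_zero.mpr hTpos.ne'
      have h1 : ∑ t ∈ Icc 1 T, (τ t : ℝ) = T * μτ := by rw [hμτ]; field_simp
      have h2 : ∑ t ∈ Icc 1 T, (τ t : ℝ) ^ 2 = T * (στ2 + μτ ^ 2) := by
        rw [hστ]; field_simp; ring
      rw [hexpand, h1, h2]; ring
  calc ∑ t ∈ Icc 1 T, (t : ℝ) ^ 2 * ⟪gradient f (x t) - gradient f (x (t - τ t)), x t - wstar⟫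
      ≤ ∑ t ∈ Icc 1 T, ((t : ℝ) ^ 2 / 4 * (f (x t) - f wstar)
          + 4608 * L ^ 2 * Gt ^ 2 / H ^ 3 * ((τ t : ℝ) + 2) ^ 2) := Finset.sum_le_sum key
    _ = (∑ t ∈ Icc 1 T, (t : ℝ) ^ 2 / 4 * (f (x t) - f wstar))
          + 4608 * L ^ 2 * Gt ^ 2 / H ^ 3 * ∑ t ∈ Icc 1 T, ((τ t : ℝ) + 2) ^ 2 := by
        rw [Finset.sum_add_distrib, Finset.mul_sum]
    _ = (∑ t ∈ Icc 1 T, (t : ℝ) ^ 2 / 4 * (f (x t) - f wstar))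
          + 4608 * L ^ 2 * Gt ^ 2 * T * (στ2 + μτ ^ 2 + 4 * μτ + 4) / H ^ 3 := by
        rw [hsum]; ring
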